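/- Define the Bell polynomial B_n(x) = ∑_{j=0}^{n} S(n,j) x^j, where S(n,j) are Stirling numbers of the second kind. Then for any λ and N ≥ n, ∑_{k=0}^{N} B_n(kλ) = ∑_{m=0}^{n} C(N+1, m+1) m! T(n,m), where T(n,m) = ∑_{r=m}^{n} S(n,r) S(r,m) λ^r. -/

import Mathlib

open Finset

/-- The Stirling number of the second kind, defined by
`S(n,m) = (1/m!) ∑_{k=0}^{m} C(m,k) (-1)^{m-k} k^n`. -/
noncomputable def stirling2 (n m : ℕ) : ℝ :=
  ((m.factorial : ℝ))⁻¹ * ∑ k ∈ range (m + 1), (m.choose k : ℝ) * (-1) ^ (m - k) * (k : ℝ) ^ n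

/-- The Bell (Touchard) polynomial `B_n(x) = ∑_{j=0}^{n} S(n,j) x^j`. -/
noncomputable def bellPoly (n : ℕ) (x : ℝ) : ℝ := ∑ j ∈ range (n + 1), stirling2 n j * x ^ j

/-- The `m`-th finite difference of `x^r` at 0. -/
noncomputable def altS (m r : ℕ) : ℝ :=
  ∑ j ∈ range (m + 1), (m.choose j : ℝ) * (-1) ^ (m - j) * (j : ℝ) ^ r

lemma altS_eq (r m : ℕ) : altS m r = (m.factorial : ℝ) * stirling2 r m := by
  unfold altS stirling2
  rw [← mul_assoc, mul_inv_cancel₀ (by exact_mod_cast m.factorial_ne_zero), one_mul]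

lemma altS_eq_zero : ∀ r m : ℕ, r < m → altS m r = 0 := by
  intro r
  induction r using Nat.strong_induction_on with
  | _ r ih =>
    intro m hm
    match r with
    | 0 =>
      have h0 := add_pow (1 : ℝ) (-1) m
      rw [show (1 : ℝ) + (-1) = 0 by ring, zero_pow (by omega)] at h0
      unfold altS
      rw [h0]
      exact Finset.sum_congr rfl fun j hj => by ring
    | s + 1 =>
      obtain ⟨p, rfl⟩ : ∃ p, m = p + 1 := ⟨m - 1, by omega⟩
      unfold altS
      rw [Finset.sum_range_succ']
      simp only [Nat.cast_zero, zero_pow (Nat.succ_ne_zero s), mul_zero, add_zero]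
      have step : ∀ i ∈ range (p + 1),
          ((p + 1).choose (i + 1) : ℝ) * (-1) ^ (p + 1 - (i + 1)) * ((i + 1 : ℕ) : ℝ) ^ (s + 1)
            = (p + 1 : ℝ) * ((p.choose i : ℝ) * (-1) ^ (p - i) * ((i : ℝ) + 1) ^ s) := by
        intro i hi
        have hc : ((p + 1) : ℕ) * p.choose i = (p + 1).choose (i + 1) * (i + 1) :=
          Nat.add_one_mul_choose_eq p i
        have hc' : ((p + 1 : ℝ)) * (p.choose i : ℝ) = ((p + 1).choose (i + 1) : ℝ) * ((i : ℝ) + 1) := by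
          exact_mod_cast congrArg (Nat.cast : ℕ → ℝ) hc
        push_cast
        rw [pow_succ' ((i : ℝ) + 1) s]
        calc ((p + 1).choose (i + 1) : ℝ) * (-1) ^ (p - i) * (((i : ℝ) + 1) * ((i : ℝ) + 1) ^ s)
            = (((p + 1).choose (i + 1) : ℝ) * ((i : ℝ) + 1)) * ((-1) ^ (p - i) * ((i : ℝ) + 1) ^ s) := by ring
          _ = ((p + 1 : ℝ) * (p.choose i : ℝ)) * ((-1) ^ (p - i) * ((i : ℝ) + 1) ^ s) := by rw [hc']
          _ = (p + 1 : ℝ) * ((p.choose i : ℝ) * (-1) ^ (p - i) * ((i : ℝ) + 1) ^ s) := by ring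
      rw [Finset.sum_congr rfl step, ← Finset.mul_sum]
      rw [show (0:ℝ) = (p + 1 : ℝ) * 0 by ring]
      congr 1
      have expand : ∀ i ∈ range (p + 1),
          (p.choose i : ℝ) * (-1) ^ (p - i) * ((i : ℝ) + 1) ^ s
            = ∑ t ∈ range (s + 1), (s.choose t : ℝ) * ((p.choose i : ℝ) * (-1) ^ (p - i) * (i : ℝ) ^ t) := by
        intro i _
        rw [add_pow (i : ℝ) 1 s, Finset.mul_sum]
        exact Finset.sum_congr rfl fun t _ => by ring
      rw [Finset.sum_congr rfl expand, Finset.sum_comm]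
      apply Finset.sum_eq_zero
      intro t ht
      rw [← Finset.mul_sum]
      have hz : ∑ i ∈ range (p + 1), (p.choose i : ℝ) * (-1) ^ (p - i) * (i : ℝ) ^ t = altS p t := rfl
      rw [hz, ih t (by simp at ht; omega) p (by simp at ht; omega), mul_zero]

lemma alt_choose_sum (q Q : ℕ) (h : q < Q) :
    ∑ t ∈ range Q, (-1 : ℝ) ^ t * (q.choose t : ℝ) = if q = 0 then 1 else 0 := by
  have hsub : range (q + 1) ⊆ range Q := Finset.range_subset_range.2 h
  rw [← Finset.sum_subset hsub (by
    intro t _ ht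
    simp only [Finset.mem_range, not_lt] at ht
    rw [Nat.choose_eq_zero_of_lt (by simpa using ht)]
    simp)]
  have hz := Int.alternating_sum_range_choose (n := q)
  have hc : ((∑ m ∈ range (q + 1), ((-1) ^ m * q.choose m : ℤ) : ℤ) : ℝ)
      = ∑ t ∈ range (q + 1), (-1 : ℝ) ^ t * (q.choose t : ℝ) := by
    push_cast
    exact Finset.sum_congr rfl fun t _ => by ring
  rw [← hc, hz]
  split_ifs <;> simp

/-- generic triangular sum swap -/
lemma tri_swap (n : ℕ) (f : ℕ → ℕ → ℝ) :
    ∑ r ∈ range (n + 1), ∑ m ∈ range (r + 1), f r m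
      = ∑ m ∈ range (n + 1), ∑ r ∈ Icc m n, f r m := by
  simp_rw [Finset.sum_sigma']
  refine Finset.sum_nbij' (fun p ↦ ⟨p.2, p.1⟩) (fun p ↦ ⟨p.2, p.1⟩) ?_ ?_ ?_ ?_ ?_ <;>
    simp only [Finset.mem_sigma, Finset.mem_range, Finset.mem_Icc] <;>
    first
      | (intro p hp; omega)
      | (intro p hp; rfl)
      | (intro p hp; trivial)

/-- `k^r = ∑_{m=0}^{M} C(k,m) * altS m r` for `k ≤ M`. -/
lemma pow_eq_sum_choose_altS (r k M : ℕ) (hk : k ≤ M) :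
    ∑ m ∈ range (M + 1), (k.choose m : ℝ) * altS m r = (k : ℝ) ^ r := by
  unfold altS
  simp_rw [Finset.mul_sum]
  rw [tri_swap M (fun m j => (k.choose m : ℝ) * ((m.choose j : ℝ) * (-1) ^ (m - j) * (j : ℝ) ^ r))]
  have inner : ∀ j ∈ range (M + 1),
      ∑ m ∈ Icc j M, (k.choose m : ℝ) * ((m.choose j : ℝ) * (-1) ^ (m - j) * (j : ℝ) ^ r)
        = (if j = k then ((j : ℝ) ^ r) else 0) := by
    intro j hj
    simp only [Finset.mem_range] at hj
    have key : ∀ m ∈ Icc j M, (k.choose m : ℝ) * ((m.choose j : ℝ) * (-1) ^ (m - j) * (j : ℝ) ^ r)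
        = (k.choose j : ℝ) * (j : ℝ) ^ r * ((-1) ^ (m - j) * ((k - j).choose (m - j) : ℝ)) := by
      intro m hm
      simp only [Finset.mem_Icc] at hm
      have hcc : (k.choose m : ℝ) * (m.choose j : ℝ) = (k.choose j : ℝ) * ((k - j).choose (m - j) : ℝ) := by
        rcases le_or_gt j k with hjk | hjk
        · rcases le_or_gt m k with hmk | hmk
          · exact_mod_cast congrArg (Nat.cast : ℕ → ℝ) (Nat.choose_mul (n := k) hm.1)
          · rw [Nat.choose_eq_zero_of_lt hmk, Nat.choose_eq_zero_of_lt (show k - j < m - j by omega)]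
            simp
        · rw [Nat.choose_eq_zero_of_lt hjk, Nat.choose_eq_zero_of_lt (show k < m by omega)]
          simp
      calc (k.choose m : ℝ) * ((m.choose j : ℝ) * (-1) ^ (m - j) * (j : ℝ) ^ r)
          = ((k.choose m : ℝ) * (m.choose j : ℝ)) * ((-1) ^ (m - j) * (j : ℝ) ^ r) := by ring
        _ = ((k.choose j : ℝ) * ((k - j).choose (m - j) : ℝ)) * ((-1) ^ (m - j) * (j : ℝ) ^ r) := by rw [hcc]
        _ = (k.choose j : ℝ) * (j : ℝ) ^ r * ((-1) ^ (m - j) * ((k - j).choose (m - j) : ℝ)) := by ring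
    rw [Finset.sum_congr rfl key, ← Finset.mul_sum]
    rw [show Icc j M = Ico j (M + 1) from (Finset.Ico_add_one_right_eq_Icc j M).symm,
      Finset.sum_Ico_eq_sum_range]
    simp only [add_tsub_cancel_left]
    rw [alt_choose_sum (k - j) (M + 1 - j) (by omega)]
    rcases lt_trichotomy j k with hlt | heq | hgt
    · rw [if_neg (by omega), mul_zero, if_neg (by omega)]
    · subst heq
      rw [if_pos (by omega), if_pos rfl, Nat.choose_self]
      simp
    · rw [Nat.choose_eq_zero_of_lt hgt, if_neg (show ¬ j = k by omega)]
      simp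
  rw [Finset.sum_congr rfl inner, Finset.sum_ite_eq' (range (M + 1)) k (fun j => (j : ℝ) ^ r),
    if_pos (Finset.mem_range.2 (by omega))]

lemma sum_pow_eq (r N : ℕ) (hr : r ≤ N) :
    ∑ k ∈ range (N + 1), (k : ℝ) ^ r
      = ∑ m ∈ range (r + 1), ((N + 1).choose (m + 1) : ℝ) * altS m r := by
  have h1 : ∀ k ∈ range (N + 1), (k : ℝ) ^ r
      = ∑ m ∈ range (N + 1), (k.choose m : ℝ) * altS m r := by
    intro k hk
    exact (pow_eq_sum_choose_altS r k N (by simp at hk; omega)).symm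
  rw [Finset.sum_congr rfl h1, Finset.sum_comm]
  have h2 : ∀ m ∈ range (N + 1),
      ∑ k ∈ range (N + 1), (k.choose m : ℝ) * altS m r
        = ((N + 1).choose (m + 1) : ℝ) * altS m r := by
    intro m _
    rw [← Finset.sum_mul]
    congr 1
    have hnat : ∑ k ∈ range (N + 1), k.choose m = (N + 1).choose (m + 1) := by
      rw [← Nat.sum_Icc_choose N m]
      refine (Finset.sum_subset (fun x hx => ?_) (fun x _ hx => ?_)).symm
      · simp only [Finset.mem_Icc] at hx
        exact Finset.mem_range.2 (by omega)
      · simp only [Finset.mem_Icc, not_and, not_le] at hx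
        exact Nat.choose_eq_zero_of_lt (by by_contra hc; push_neg at hc; simp at *; omega)
    exact_mod_cast congrArg (Nat.cast : ℕ → ℝ) hnat
  rw [Finset.sum_congr rfl h2]
  refine (Finset.sum_subset (Finset.range_subset_range.2 (by omega)) (fun m _ hm => ?_)).symm
  simp only [Finset.mem_range, not_lt] at hm
  rw [altS_eq_zero r m (by omega), mul_zero]

/-- For any real `λ` and `N ≥ n`,
`∑_{k=0}^{N} B_n(kλ) = ∑_{m=0}^{n} C(N+1, m+1) m! T(n,m)`, where
`T(n,m) = ∑_{r=m}^{n} S(n,r) S(r,m) λ^r`. -/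
theorem sum_bellPoly (n N : ℕ) (h : n ≤ N) (lam : ℝ) :
    ∑ k ∈ range (N + 1), bellPoly n (k * lam) =
      ∑ m ∈ range (n + 1), ((N + 1).choose (m + 1) : ℝ) * (m.factorial : ℝ) *
        ∑ r ∈ Icc m n, stirling2 n r * stirling2 r m * lam ^ r := by
  calc ∑ k ∈ range (N + 1), bellPoly n (k * lam)
      = ∑ k ∈ range (N + 1), ∑ r ∈ range (n + 1), stirling2 n r * lam ^ r * (k : ℝ) ^ r := by
        refine Finset.sum_congr rfl fun k _ => ?_
        unfold bellPoly
        exact Finset.sum_congr rfl fun r _ => by rw [mul_pow]; ring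
    _ = ∑ r ∈ range (n + 1), stirling2 n r * lam ^ r * ∑ k ∈ range (N + 1), (k : ℝ) ^ r := by
        rw [Finset.sum_comm]
        exact Finset.sum_congr rfl fun r _ => by rw [Finset.mul_sum]
    _ = ∑ r ∈ range (n + 1), ∑ m ∈ range (r + 1),
          stirling2 n r * lam ^ r * (((N + 1).choose (m + 1) : ℝ) * altS m r) := by
        refine Finset.sum_congr rfl fun r hr => ?_
        rw [sum_pow_eq r N (by simp at hr; omega), Finset.mul_sum]
    _ = ∑ m ∈ range (n + 1), ∑ r ∈ Icc m n,
          stirling2 n r * lam ^ r * (((N + 1).choose (m + 1) : ℝ) * altS m r) :=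
        tri_swap n _
    _ = ∑ m ∈ range (n + 1), ((N + 1).choose (m + 1) : ℝ) * (m.factorial : ℝ) *
          ∑ r ∈ Icc m n, stirling2 n r * stirling2 r m * lam ^ r := by
        refine Finset.sum_congr rfl fun m _ => ?_
        rw [Finset.mul_sum]
        refine Finset.sum_congr rfl fun r _ => ?_
        rw [altS_eq r m]
        ring
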